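/- Let G be a graph on vertex set [N] and let H be the step-up of G. Then the clique number of H satisfies ω(H) ≤ ω(G) + 1. -/

import Mathlib

/-- For distinct binary sequences, the first position where they differ. -/
noncomputable def delta {N : ℕ} (a b : Fin N → Bool) : ℕ :=
  sInf {i : ℕ | ∃ h : i < N, a ⟨i, h⟩ ≠ b ⟨i, h⟩}

/-- The lexicographic order on binary sequences. -/
def lexLt {N : ℕ} (a b : Fin N → Bool) : Prop :=
  ∃ h : delta a b < N, a ⟨delta a b, h⟩ < b ⟨delta a b, h⟩

/-- For `a ≺ b ≺ c`, the triple `{a,b,c}` is an edge of the step-up of `G` iff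
`δ(a,b) < δ(b,c)` and `{δ(a,b), δ(b,c)}` is an edge of `G`. -/
def stepEdge {N : ℕ} (G : SimpleGraph (Fin N)) (a b c : Fin N → Bool) : Prop :=
  delta a b < delta b c ∧
    ∃ (h1 : delta a b < N) (h2 : delta b c < N),
      G.Adj ⟨delta a b, h1⟩ ⟨delta b c, h2⟩

section aux

variable {N : ℕ} {a b c : Fin N → Bool}

lemma delta_comm (a b : Fin N → Bool) : delta a b = delta b a := by
  unfold delta
  congr 1
  ext i
  exact exists_congr fun h => ne_comm

lemma delta_spec (hab : a ≠ b) :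
    ∃ h : delta a b < N, a ⟨delta a b, h⟩ ≠ b ⟨delta a b, h⟩ := by
  have hne : {i : ℕ | ∃ h : i < N, a ⟨i, h⟩ ≠ b ⟨i, h⟩}.Nonempty := by
    obtain ⟨x, hx⟩ := Function.ne_iff.mp hab
    exact ⟨x.1, x.2, by simpa using hx⟩
  exact Nat.sInf_mem hne

lemma delta_agree {i : ℕ} (hi : i < N) (h : i < delta a b) :
    a ⟨i, hi⟩ = b ⟨i, hi⟩ := by
  have := Nat.notMem_of_lt_sInf
    (s := {i : ℕ | ∃ h : i < N, a ⟨i, h⟩ ≠ b ⟨i, h⟩}) h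
  by_contra hne
  exact this ⟨hi, hne⟩

lemma delta_eq_of {j : ℕ} (hj : j < N) (hne : a ⟨j, hj⟩ ≠ b ⟨j, hj⟩)
    (hbelow : ∀ i (hi : i < N), i < j → a ⟨i, hi⟩ = b ⟨i, hi⟩) :
    delta a b = j := by
  refine le_antisymm (Nat.sInf_le ⟨hj, hne⟩) ?_
  by_contra hlt
  push_neg at hlt
  obtain ⟨h, hne'⟩ := Nat.sInf_mem
    (⟨j, hj, hne⟩ : {i : ℕ | ∃ h : i < N, a ⟨i, h⟩ ≠ b ⟨i, h⟩}.Nonempty)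
  exact hne' (hbelow _ h hlt)

lemma lexLt_ne (h : lexLt a b) : a ≠ b := by
  obtain ⟨h1, hlt⟩ := h
  intro heq
  subst heq
  exact lt_irrefl _ hlt

lemma lexLt_total (hab : a ≠ b) : lexLt a b ∨ lexLt b a := by
  obtain ⟨h, hne⟩ := delta_spec hab
  rcases lt_or_gt_of_ne hne with hlt | hgt
  · exact Or.inl ⟨h, hlt⟩
  · right
    unfold lexLt
    rw [delta_comm b a]
    exact ⟨h, hgt⟩

lemma delta_trans (hab : a ≠ b) (hlt : delta a b < delta b c) :
    delta a c = delta a b := by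
  obtain ⟨h, hne⟩ := delta_spec hab
  refine delta_eq_of h ?_ ?_
  · have hbc : b ⟨delta a b, h⟩ = c ⟨delta a b, h⟩ := delta_agree h hlt
    rw [← hbc]; exact hne
  · intro i hi hij
    rw [delta_agree hi hij, delta_agree hi (hij.trans hlt)]

lemma delta_trans' (hbc : b ≠ c) (hlt : delta b c < delta a b) :
    delta a c = delta b c := by
  obtain ⟨h, hne⟩ := delta_spec hbc
  refine delta_eq_of h ?_ ?_
  · have hab : a ⟨delta b c, h⟩ = b ⟨delta b c, h⟩ := delta_agree h hlt
    rw [hab]; exact hne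
  · intro i hi hij
    rw [delta_agree hi (hij.trans hlt), delta_agree hi hij]

lemma lexLt_trans (hab : lexLt a b) (hbc : lexLt b c) : lexLt a c := by
  obtain ⟨h1, hlt1⟩ := hab
  obtain ⟨h2, hlt2⟩ := hbc
  rcases lt_trichotomy (delta a b) (delta b c) with h | h | h
  · have hd : delta a c = delta a b := delta_trans (lexLt_ne ⟨h1, hlt1⟩) h
    unfold lexLt
    rw [hd]
    refine ⟨h1, ?_⟩
    have : b ⟨delta a b, h1⟩ = c ⟨delta a b, h1⟩ := delta_agree h1 h
    rw [← this]; exact hlt1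
  · exfalso
    have hfin : (⟨delta a b, h1⟩ : Fin N) = ⟨delta b c, h2⟩ := Fin.ext h
    rw [hfin] at hlt1
    simp [Bool.lt_iff] at hlt1 hlt2
    rw [hlt2.1] at hlt1
    exact absurd hlt1.2 (by simp)
  · have hd : delta a c = delta b c := delta_trans' (lexLt_ne ⟨h2, hlt2⟩) h
    unfold lexLt
    rw [hd]
    refine ⟨h2, ?_⟩
    have : a ⟨delta b c, h2⟩ = b ⟨delta b c, h2⟩ := delta_agree h2 h
    rw [this]; exact hlt2

end aux

/-- If `H` is the step-up of `G`, then `ω(H) ≤ ω(G) + 1`: every clique of the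
step-up hypergraph has size at most `ω(G) + 1`. -/
theorem stepUp_cliqueNum {N : ℕ} (G : SimpleGraph (Fin N)) (S : Finset (Fin N → Bool))
    (hS : ∀ a ∈ S, ∀ b ∈ S, ∀ c ∈ S, lexLt a b → lexLt b c → stepEdge G a b c) :
    S.card ≤ G.cliqueNum + 1 := by
  classical
  let r : (Fin N → Bool) → (Fin N → Bool) → Prop := fun a b => lexLt a b ∨ a = b
  haveI : DecidableRel r := Classical.decRel r
  haveI : IsTrans _ r := ⟨by
    rintro a b c (hab | rfl) (hbc | rfl)
    · exact Or.inl (lexLt_trans hab hbc)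
    · exact Or.inl hab
    · exact Or.inl hbc
    · exact Or.inr rfl⟩
  haveI : IsAntisymm _ r := ⟨by
    rintro a b (hab | rfl) (hba | hba)
    · exfalso
      obtain ⟨h1, hlt1⟩ := hab
      obtain ⟨h2, hlt2⟩ := hba
      have hd : delta b a = delta a b := delta_comm b a
      have hfin : (⟨delta b a, h2⟩ : Fin N) = ⟨delta a b, h1⟩ := Fin.ext hd
      rw [hfin] at hlt2
      exact absurd hlt1 (not_lt_of_gt hlt2)
    · exact hba.symm
    · rfl
    · rfl⟩
  haveI : IsTotal _ r := ⟨by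
    intro a b
    by_cases h : a = b
    · exact Or.inl (Or.inr h)
    · rcases lexLt_total h with h' | h'
      · exact Or.inl (Or.inl h')
      · exact Or.inr (Or.inl h')⟩
  set l := S.sort r with hl
  have hlen : l.length = S.card := Finset.length_sort r
  have hsorted : l.Pairwise r := Finset.pairwise_sort S r
  have hnodup : l.Nodup := Finset.sort_nodup S r
  have hmem : ∀ i : Fin l.length, l.get i ∈ S := fun i => by
    rw [← Finset.mem_sort r]; exact l.get_mem i
  have hlex : ∀ i j : Fin l.length, i < j → lexLt (l.get i) (l.get j) := by
    intro i j hij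
    rcases hsorted.rel_get_of_lt hij with h | h
    · exact h
    · exact absurd (List.nodup_iff_injective_get.mp hnodup h) (Fin.ne_of_lt hij)
  -- the key claim: delta between l[i] and any later l[j] equals delta of the
  -- consecutive pair at i
  have claim : ∀ m : ℕ, ∀ i j : Fin l.length, j.1 = i.1 + 1 + m →
      ∀ h' : i.1 + 1 < l.length,
      delta (l.get i) (l.get j) =
        delta (l.get i) (l.get ⟨i.1 + 1, h'⟩) := by
    intro m
    induction m with
    | zero =>
      intro i j hj h'
      have : j = ⟨i.1 + 1, h'⟩ := Fin.ext (by simpa using hj)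
      rw [this]
    | succ m ih =>
      intro i j hj h'
      have hj' : i.1 + 1 + m < l.length := by omega
      set j' : Fin l.length := ⟨i.1 + 1 + m, hj'⟩ with hj'def
      have hij' : i < j' := by rw [hj'def]; exact Fin.mk_lt_mk.mpr (by omega) |>.trans_le le_rfl
      have hj'j : j' < j := by
        rw [Fin.lt_def, hj'def]; simp; omega
      have hab := hlex i j' hij'
      have hbc := hlex j' j hj'j
      obtain ⟨hlt, -⟩ := hS _ (hmem i) _ (hmem j') _ (hmem j) hab hbc
      rw [delta_trans (lexLt_ne hab) hlt]
      exact ih i j' rfl h'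
  -- define the clique vertices
  have hd1 : ∀ i : Fin (l.length - 1), (i.1 : ℕ) < l.length := fun i => by
    have := i.2; omega
  have hd2 : ∀ i : Fin (l.length - 1), (i.1 + 1 : ℕ) < l.length := fun i => by
    have := i.2; omega
  have hdN : ∀ i : Fin (l.length - 1),
      delta (l.get ⟨i.1, hd1 i⟩) (l.get ⟨i.1 + 1, hd2 i⟩) < N := fun i =>
    (hlex ⟨i.1, hd1 i⟩ ⟨i.1 + 1, hd2 i⟩ (Fin.mk_lt_mk.mpr (Nat.lt_succ_self _))).1
  let d : Fin (l.length - 1) → Fin N := fun i =>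
    ⟨delta (l.get ⟨i.1, hd1 i⟩) (l.get ⟨i.1 + 1, hd2 i⟩), hdN i⟩
  -- for i < j, the relevant deltas are adjacent in G and increasing
  have key : ∀ i j : Fin (l.length - 1), i < j → G.Adj (d i) (d j) ∧ d i < d j := by
    intro i j hij
    have hij' : (i.1 : ℕ) < j.1 := hij
    set a := l.get ⟨i.1, hd1 i⟩ with ha
    set b := l.get ⟨j.1, hd1 j⟩ with hb
    set c := l.get ⟨j.1 + 1, hd2 j⟩ with hc
    have hab : lexLt a b := hlex _ _ (Fin.mk_lt_mk.mpr hij')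
    have hbc : lexLt b c := hlex _ _ (Fin.mk_lt_mk.mpr (Nat.lt_succ_self _))
    obtain ⟨hlt, h1, h2, hadj⟩ := hS _ (hmem _) _ (hmem _) _ (hmem _) hab hbc
    have hdi : delta a b = (d i).1 := by
      have := claim (j.1 - i.1 - 1) ⟨i.1, hd1 i⟩ ⟨j.1, hd1 j⟩ (by simp; omega) (hd2 i)
      exact this
    have hdj : delta b c = (d j).1 := rfl
    constructor
    · have e1 : d i = ⟨delta a b, h1⟩ := Fin.ext hdi.symm
      have e2 : d j = ⟨delta b c, h2⟩ := Fin.ext hdj.symm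
      rw [e1, e2]; exact hadj
    · rw [Fin.lt_def, ← hdi, ← hdj]; exact hlt
  have hinj : Function.Injective d := by
    intro i j hij
    by_contra hne
    rcases lt_or_gt_of_ne hne with h | h
    · exact absurd hij (Fin.ne_of_lt (key i j h).2)
    · exact absurd hij.symm (Fin.ne_of_lt (key j i h).2)
  let s : Finset (Fin N) := Finset.image d Finset.univ
  have hcard : s.card = l.length - 1 := by
    rw [Finset.card_image_of_injective _ hinj, Finset.card_univ, Fintype.card_fin]
  have hclique : G.IsClique (s : Set (Fin N)) := by
    intro x hx y hy hxy
    simp only [s, Finset.coe_image, Set.mem_image, Finset.mem_coe,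
      Finset.coe_univ, Set.image_univ, Set.mem_range] at hx hy
    obtain ⟨i, rfl⟩ := hx
    obtain ⟨j, rfl⟩ := hy
    have hne : i ≠ j := fun h => hxy (by rw [h])
    rcases lt_or_gt_of_ne hne with h | h
    · exact (key i j h).1
    · exact ((key j i h).1).symm
  have := @SimpleGraph.IsClique.card_le_cliqueNum _ G _ s hclique
  omega
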